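/- Let c > 0 and let f be a probability density on [0,c] with monotone hazard rate. Then for every x ∈ (0,1], ∫₀ᶜ v·x·(∫_{v·x}^c f(u) du)·f(v) dv ≥ ∫₀^{c·x} (v/x)·(∫_{v/x}^c f(u) du)·f(v) dv. -/

import Mathlib

open MeasureTheory Set

/-- For an MHR probability density `f` on `[0,c]` and any signal ratio `x ∈ (0,1]`,
the high-CTR bidder's side of the revenue dominates the low-CTR bidder's side:
`∫₀ᶜ v·x·(∫_{v·x}^c f)·f(v) dv ≥ ∫₀^{c·x} (v/x)·(∫_{v/x}^c f)·f(v) dv`. -/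
theorem mhr_revenue_side_ineq (c : ℝ) (hc : 0 < c) (f : ℝ → ℝ)
    (hf_nonneg : ∀ v ∈ Set.Icc (0 : ℝ) c, 0 ≤ f v)
    (hf_int : (∫ v in (0 : ℝ)..c, f v) = 1)
    (hMHR : ∀ v₁ ∈ Set.Icc (0 : ℝ) c, ∀ v₂ ∈ Set.Icc (0 : ℝ) c, v₁ ≤ v₂ →
      (∫ u in (0 : ℝ)..v₁, f u) < 1 → (∫ u in (0 : ℝ)..v₂, f u) < 1 →
      f v₁ / (1 - ∫ u in (0 : ℝ)..v₁, f u) ≤ f v₂ / (1 - ∫ u in (0 : ℝ)..v₂, f u)) :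
    ∀ x ∈ Set.Ioc (0 : ℝ) 1,
      (∫ v in (0 : ℝ)..(c * x), (v / x) * (∫ u in (v / x)..c, f u) * f v)
        ≤ ∫ v in (0 : ℝ)..c, v * x * (∫ u in (v * x)..c, f u) * f v := by
  intro x hx
  obtain ⟨hx0, hx1⟩ := hx
  -- f is interval integrable on [0, c]
  have hfi : IntervalIntegrable f volume 0 c := by
    by_contra h
    rw [intervalIntegral.integral_undef h] at hf_int
    norm_num at hf_int
  have hfi' : ∀ a b : ℝ, a ∈ Icc (0:ℝ) c → b ∈ Icc (0:ℝ) c →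
      IntervalIntegrable f volume a b := by
    intro a b ha hb
    refine hfi.mono_set ?_
    rw [uIcc_of_le hc.le]
    exact uIcc_subset_Icc ha hb
  set F : ℝ → ℝ := fun t => ∫ u in (0:ℝ)..t, f u with hFdef
  set G : ℝ → ℝ := fun t => ∫ u in t..c, f u with hGdef
  -- F + G = 1 on [0,c]
  have hFG : ∀ t ∈ Icc (0:ℝ) c, G t = 1 - F t := by
    intro t ht
    have h := intervalIntegral.integral_add_adjacent_intervals
      (hfi' 0 t (by simp [hc.le]) ht) (hfi' t c ht (by simp [hc.le]))
    simp only [hFdef, hGdef]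
    rw [hf_int] at h
    linarith [h]
  have hGnonneg : ∀ t ∈ Icc (0:ℝ) c, 0 ≤ G t := by
    intro t ht
    exact intervalIntegral.integral_nonneg ht.2
      (fun u hu => hf_nonneg u ⟨le_trans ht.1 hu.1, hu.2⟩)
  have hFmono : ∀ s ∈ Icc (0:ℝ) c, ∀ t ∈ Icc (0:ℝ) c, s ≤ t → F s ≤ F t := by
    intro s hs t ht hst
    have h := intervalIntegral.integral_add_adjacent_intervals
      (hfi' 0 s (by simp [hc.le]) hs) (hfi' s t hs ht)
    have hnn : 0 ≤ ∫ u in s..t, f u :=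
      intervalIntegral.integral_nonneg hst
        (fun u hu => hf_nonneg u ⟨le_trans hs.1 hu.1, le_trans hu.2 ht.2⟩)
    simp only [hFdef]
    linarith [h]
  -- the key pointwise inequality
  have key : ∀ w ∈ Icc (0:ℝ) c, G w * f (w * x) ≤ G (w * x) * f w := by
    intro w hw
    have hwx : w * x ∈ Icc (0:ℝ) c := by
      constructor
      · exact mul_nonneg hw.1 hx0.le
      · calc w * x ≤ w * 1 := by nlinarith [hw.1]
          _ ≤ c := by linarith [hw.2]
    have hle : w * x ≤ w := by nlinarith [hw.1]
    rcases eq_or_lt_of_le (hGnonneg w hw) with h0 | h0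
    · rw [← h0]
      simp only [zero_mul]
      exact mul_nonneg (hGnonneg _ hwx) (hf_nonneg w hw)
    · have hFw : F w < 1 := by have := hFG w hw; linarith
      have hGmx : G w ≤ G (w * x) := by
        have := hFG w hw
        have := hFG (w * x) hwx
        have := hFmono (w * x) hwx w hw hle
        linarith
      have hGx0 : 0 < G (w * x) := lt_of_lt_of_le h0 hGmx
      have hFwx : F (w * x) < 1 := by have := hFG (w * x) hwx; linarith
      have hm := hMHR (w * x) hwx w hw hle hFwx hFw
      have h1 : f (w * x) / G (w * x) ≤ f w / G w := by
        have e1 : (1 : ℝ) - F (w * x) = G (w * x) := (hFG (w * x) hwx).symm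
        have e2 : (1 : ℝ) - F w = G w := (hFG w hw).symm
        rw [← e1, ← e2]
        exact hm
      rw [div_le_div_iff₀ hGx0 h0] at h1
      linarith [h1]
  -- continuity of G on [0,c]
  have hGcont : ContinuousOn G (Icc (0:ℝ) c) := by
    have hion : IntegrableOn f (uIcc (0:ℝ) c) volume := by
      rw [uIcc_of_le hc.le]
      exact (intervalIntegrable_iff_integrableOn_Icc_of_le hc.le).mp hfi
    have := intervalIntegral.continuousOn_primitive_interval_left
      (μ := volume) (f := f) (a := 0) (b := c) hion
    rwa [uIcc_of_le hc.le] at this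
  have hmaps : MapsTo (fun w : ℝ => w * x) (Icc (0:ℝ) c) (Icc (0:ℝ) c) := by
    intro w hw
    constructor
    · exact mul_nonneg hw.1 hx0.le
    · calc w * x ≤ w * 1 := by nlinarith [hw.1]
        _ ≤ c := by linarith [hw.2]
  -- integrability of the two integrands
  have hI1 : IntervalIntegrable (fun w => w * x * G (w * x) * f w) volume 0 c := by
    have hcont : ContinuousOn (fun w : ℝ => w * x * G (w * x)) (uIcc 0 c) := by
      rw [uIcc_of_le hc.le]
      exact ((continuousOn_id.mul continuousOn_const).mul
        (hGcont.comp (continuousOn_id.mul continuousOn_const) hmaps))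
    simpa [mul_comm] using hfi.continuousOn_mul hcont
  have hfix : IntervalIntegrable (fun w => f (w * x)) volume 0 c := by
    have h1 : IntervalIntegrable f volume 0 (c * x) :=
      hfi' 0 (c * x) (by simp [hc.le]) ⟨by positivity, by nlinarith⟩
    have h2 := h1.comp_mul_right (c := x)
    have hx' : x ≠ 0 := hx0.ne'
    simpa [hx', mul_div_assoc, div_self hx'] using h2
  have hI2 : IntervalIntegrable (fun w => x * (w * G w * f (w * x))) volume 0 c := by
    have hcont : ContinuousOn (fun w : ℝ => x * (w * G w)) (uIcc 0 c) := by
      rw [uIcc_of_le hc.le]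
      exact continuousOn_const.mul (continuousOn_id.mul hGcont)
    have h := hfix.continuousOn_mul hcont
    have heq : (fun w : ℝ => x * (w * G w * f (w * x)))
        = fun w : ℝ => x * (w * G w) * f (w * x) := by
      funext w; ring
    rw [heq]
    exact h
  -- change of variables in the LHS integral
  have hsub : (∫ v in (0:ℝ)..(c * x), (v / x) * G (v / x) * f v)
      = ∫ w in (0:ℝ)..c, x * (w * G w * f (w * x)) := by
    have h := intervalIntegral.integral_comp_mul_right
      (a := (0:ℝ)) (b := c) (fun v => (v / x) * G (v / x) * f v) hx0.ne'
    have hx' : x ≠ 0 := hx0.ne'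
    rw [intervalIntegral.integral_const_mul]
    have heq : (∫ w in (0:ℝ)..c, (fun v => (v / x) * G (v / x) * f v) (w * x))
        = ∫ w in (0:ℝ)..c, w * G w * f (w * x) := by
      apply intervalIntegral.integral_congr
      intro w _
      simp [mul_div_assoc, div_self hx']
    rw [heq] at h
    rw [zero_mul] at h
    rw [eq_comm, ← smul_eq_mul, eq_comm]
    rw [h, smul_smul, mul_inv_cancel₀ hx', one_smul]
  calc (∫ v in (0:ℝ)..(c * x), (v / x) * (∫ u in (v / x)..c, f u) * f v)
      = ∫ w in (0:ℝ)..c, x * (w * G w * f (w * x)) := hsub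
    _ ≤ ∫ w in (0:ℝ)..c, w * x * G (w * x) * f w := by
        apply intervalIntegral.integral_mono_on hc.le hI2 hI1
        intro w hw
        have hk := key w hw
        have hwn : 0 ≤ w := hw.1
        nlinarith [mul_le_mul_of_nonneg_left hk (mul_nonneg hwn hx0.le)]
    _ = ∫ v in (0:ℝ)..c, v * x * (∫ u in (v * x)..c, f u) * f v := rfl
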